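/- Let ≤ and ≤′ be two linear vector-space orders on the real vector space ⊕_E ℝ, and let a be a rational vector with 0 ≤ a and 0 ≤′ a. Let V_a, H_a be taken with respect to ≤ and V′_a, H′_a with respect to ≤′, and assume H_a = H′_a. Then the induced orders on V_a ∩ (rational vectors) are identical (for every rational vector x ∈ V_a ∪ V′_a one has 0 ≤ x iff 0 ≤′ x) if and only if the induced orders on H_a ∩ (rational vectors) are identical (for every rational vector x ∈ H_a one has 0 ≤ x iff 0 ≤′ x). -/

import Mathlib

/-- The rational vectors of `⊕_E ℝ`. -/
def RatVec (E : Type*) : Set (E →₀ ℝ) := {x | ∀ e : E, ∃ q : ℚ, x e = (q : ℝ)}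

/-- A linear vector-space order on `⊕_E ℝ`, given as a binary relation. -/
def IsLinVecOrder {E : Type*} (le : (E →₀ ℝ) → (E →₀ ℝ) → Prop) : Prop :=
  IsLinearOrder (E →₀ ℝ) le ∧
  (∀ x y z : E →₀ ℝ, le x y → le (x + z) (y + z)) ∧
  (∀ (α : ℝ) (v : E →₀ ℝ), 0 ≤ α → le 0 v → le 0 (α • v))

open Classical in
/-- `|a| = max (a, -a)` with respect to a total order `le`. -/
noncomputable def vabs {E : Type*} (le : (E →₀ ℝ) → (E →₀ ℝ) → Prop) (a : E →₀ ℝ) :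
    E →₀ ℝ :=
  if le 0 a then a else -a

/-- `V_a = span_ℝ {x | 0 ≤ x ∧ x ≤ |a|}`. -/
noncomputable def Vsub {E : Type*} (le : (E →₀ ℝ) → (E →₀ ℝ) → Prop) (a : E →₀ ℝ) :
    Submodule ℝ (E →₀ ℝ) :=
  Submodule.span ℝ {x | le 0 x ∧ le x (vabs le a)}

/-- `H_a = span_ℝ {x | 0 ≤ x ∧ ∀ n : ℕ, n • x ≤ |a|}`. -/
noncomputable def Hsub {E : Type*} (le : (E →₀ ℝ) → (E →₀ ℝ) → Prop) (a : E →₀ ℝ) :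
    Submodule ℝ (E →₀ ℝ) :=
  Submodule.span ℝ {x | le 0 x ∧ ∀ n : ℕ, le (n • x) (vabs le a)}

namespace LV

variable {E : Type*} {le : (E →₀ ℝ) → (E →₀ ℝ) → Prop} {a : E →₀ ℝ}

theorem refl (hle : IsLinVecOrder le) (x : E →₀ ℝ) : le x x := by
  haveI := hle.1; exact refl_of le x

theorem trans (hle : IsLinVecOrder le) {x y z : E →₀ ℝ} (h1 : le x y) (h2 : le y z) :
    le x z := by
  haveI := hle.1; exact trans_of le h1 h2

theorem antisymm (hle : IsLinVecOrder le) {x y : E →₀ ℝ} (h1 : le x y) (h2 : le y x) :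
    x = y := by
  haveI := hle.1; exact antisymm_of le h1 h2

theorem total (hle : IsLinVecOrder le) (x y : E →₀ ℝ) : le x y ∨ le y x := by
  haveI := hle.1; exact total_of le x y

theorem sub_nonneg (hle : IsLinVecOrder le) {x y : E →₀ ℝ} : le x y ↔ le 0 (y - x) := by
  constructor
  · intro h
    have := hle.2.1 x y (-x) h
    rwa [add_neg_cancel, ← sub_eq_add_neg] at this
  · intro h
    have := hle.2.1 0 (y - x) x h
    simpa using this

theorem smul_nonneg (hle : IsLinVecOrder le) {α : ℝ} {v : E →₀ ℝ} (hα : 0 ≤ α)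
    (h : le 0 v) : le 0 (α • v) := hle.2.2 α v hα h

theorem smul_le_smul (hle : IsLinVecOrder le) {x y : E →₀ ℝ} {α : ℝ} (hα : 0 ≤ α)
    (h : le x y) : le (α • x) (α • y) := by
  rw [sub_nonneg hle] at h ⊢
  have := smul_nonneg hle hα h
  rwa [smul_sub] at this

theorem smul_mono (hle : IsLinVecOrder le) {v : E →₀ ℝ} {α β : ℝ} (hv : le 0 v)
    (h : α ≤ β) : le (α • v) (β • v) := by
  rw [sub_nonneg hle]
  have := smul_nonneg hle (by linarith : (0:ℝ) ≤ β - α) hv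
  rwa [sub_smul] at this

theorem add_le_add (hle : IsLinVecOrder le) {x y z w : E →₀ ℝ} (h1 : le x y)
    (h2 : le z w) : le (x + z) (y + w) := by
  have a1 := hle.2.1 x y z h1
  have a2 := hle.2.1 z w y h2
  rw [add_comm z y, add_comm w y] at a2
  exact trans hle a1 a2

theorem neg_le_neg (hle : IsLinVecOrder le) {x y : E →₀ ℝ} (h : le x y) :
    le (-y) (-x) := by
  rw [sub_nonneg hle] at h ⊢
  convert h using 1
  abel

theorem neg_nonneg (hle : IsLinVecOrder le) {x : E →₀ ℝ} (h : le x 0) : le 0 (-x) := by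
  simpa using neg_le_neg hle h

theorem abs_nonneg (hle : IsLinVecOrder le) (x : E →₀ ℝ) : le 0 (vabs le x) := by
  unfold vabs
  split_ifs with h
  · exact h
  · rcases total hle 0 x with h' | h'
    · exact absurd h' h
    · exact neg_nonneg hle h'

theorem le_abs (hle : IsLinVecOrder le) (x : E →₀ ℝ) : le x (vabs le x) := by
  unfold vabs
  split_ifs with h
  · exact refl hle x
  · rcases total hle 0 x with h' | h'
    · exact absurd h' h
    · exact trans hle h' (neg_nonneg hle h')

theorem neg_abs_le (hle : IsLinVecOrder le) (x : E →₀ ℝ) : le (-(vabs le x)) x := by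
  unfold vabs
  split_ifs with h
  · have h1 : le (-x) 0 := by simpa using neg_le_neg hle h
    exact trans hle h1 h
  · rw [neg_neg]; exact refl hle x

theorem abs_le (hle : IsLinVecOrder le) {x b : E →₀ ℝ} (h1 : le (-b) x) (h2 : le x b) :
    le (vabs le x) b := by
  unfold vabs
  split_ifs with h
  · exact h2
  · have := neg_le_neg hle h1
    rwa [neg_neg] at this

theorem abs_eq_or (le : (E →₀ ℝ) → (E →₀ ℝ) → Prop) (x : E →₀ ℝ) :
    x = vabs le x ∨ x = -(vabs le x) := by
  unfold vabs
  split_ifs with h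
  · exact Or.inl rfl
  · exact Or.inr (by rw [neg_neg])

theorem vabs_zero (le : (E →₀ ℝ) → (E →₀ ℝ) → Prop) : vabs le (0 : E →₀ ℝ) = 0 := by
  unfold vabs
  split_ifs <;> simp

theorem abs_add (hle : IsLinVecOrder le) (x y : E →₀ ℝ) :
    le (vabs le (x + y)) (vabs le x + vabs le y) := by
  refine abs_le hle ?_ ?_
  · have := add_le_add hle (neg_abs_le hle x) (neg_abs_le hle y)
    simpa [neg_add, add_comm] using this
  · exact add_le_add hle (le_abs hle x) (le_abs hle y)

theorem smul_le_abs (hle : IsLinVecOrder le) (α : ℝ) (x : E →₀ ℝ) :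
    le (α • x) (|α| • vabs le x) := by
  rcases le_or_gt 0 α with hα | hα
  · rw [abs_of_nonneg hα]
    exact smul_le_smul hle hα (le_abs hle x)
  · rw [abs_of_neg hα]
    have : le (-x) (vabs le x) := by
      have := neg_le_neg hle (neg_abs_le hle x); rwa [neg_neg] at this
    have h2 := smul_le_smul hle (by linarith : (0:ℝ) ≤ -α) this
    rwa [smul_neg, neg_smul, neg_neg] at h2

theorem abs_smul_le (hle : IsLinVecOrder le) (α : ℝ) (x : E →₀ ℝ) :
    le (vabs le (α • x)) (|α| • vabs le x) := by
  refine abs_le hle ?_ ?_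
  · have := smul_le_abs hle (-α) x
    rw [neg_smul] at this
    have := neg_le_neg hle this
    rwa [neg_neg, abs_neg] at this
  · exact smul_le_abs hle α x

theorem abs_neg_le (hle : IsLinVecOrder le) (x : E →₀ ℝ) :
    le (vabs le (-x)) (vabs le x) := by
  refine abs_le hle ?_ ?_
  · exact neg_le_neg hle (le_abs hle x)
  · have := neg_le_neg hle (neg_abs_le hle x)
    rwa [neg_neg] at this

theorem vabs_a (hle : IsLinVecOrder le) (h0a : le 0 a) : vabs le a = a := by
  unfold vabs; exact if_pos h0a

/-- Characterization of membership in `Hsub`. -/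
theorem mem_H_iff (hle : IsLinVecOrder le) (h0a : le 0 a) {x : E →₀ ℝ} :
    x ∈ Hsub le a ↔ ∀ n : ℕ, le (n • vabs le x) a := by
  constructor
  · intro hx
    induction hx using Submodule.span_induction with
    | mem y hy =>
      intro n
      have h1 : vabs le y = y := by unfold vabs; exact if_pos hy.1
      rw [h1, ← vabs_a hle h0a]
      exact hy.2 n
    | zero => intro n; rw [vabs_zero]; simpa using h0a
    | add y z hy hz ihy ihz =>
      intro n
      rw [← Nat.cast_smul_eq_nsmul ℝ]
      have h1 : le ((n : ℝ) • vabs le (y + z)) ((n : ℝ) • (vabs le y + vabs le z)) :=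
        smul_le_smul hle (by positivity) (abs_add hle y z)
      rw [smul_add] at h1
      have half : ∀ w : E →₀ ℝ, le (((2 * n : ℕ) : ℝ) • w) a →
          le ((n : ℝ) • w) ((1/2 : ℝ) • a) := by
        intro w hw
        have := smul_le_smul hle (by norm_num : (0:ℝ) ≤ 1/2) hw
        rw [smul_smul] at this
        convert this using 2
        push_cast; ring
      have h2' := half _ (by rw [Nat.cast_smul_eq_nsmul ℝ]; exact ihy (2 * n))
      have h3' := half _ (by rw [Nat.cast_smul_eq_nsmul ℝ]; exact ihz (2 * n))
      have h4 : le ((n : ℝ) • vabs le y + (n : ℝ) • vabs le z) a := by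
        have := add_le_add hle h2' h3'
        rw [← add_smul] at this
        norm_num at this
        exact this
      exact trans hle h1 h4
    | smul α y hy ihy =>
      intro n
      rw [← Nat.cast_smul_eq_nsmul ℝ]
      have h1 : le ((n : ℝ) • vabs le (α • y)) ((n : ℝ) • (|α| • vabs le y)) :=
        smul_le_smul hle (by positivity) (abs_smul_le hle α y)
      rw [smul_smul] at h1
      set m : ℕ := ⌈(n : ℝ) * |α|⌉₊ with hm
      have h2 : le (((n : ℝ) * |α|) • vabs le y) ((m : ℝ) • vabs le y) :=
        smul_mono hle (abs_nonneg hle y) (Nat.le_ceil ((n : ℝ) * |α|))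
      have h3 : le ((m : ℝ) • vabs le y) a := by
        rw [Nat.cast_smul_eq_nsmul ℝ]; exact ihy m
      exact trans hle h1 (trans hle h2 h3)
  · intro h
    have habs : vabs le x ∈ Hsub le a := by
      apply Submodule.subset_span
      refine ⟨abs_nonneg hle x, fun n => ?_⟩
      rw [vabs_a hle h0a]
      exact h n
    rcases abs_eq_or le x with he | he
    · rw [he]; exact habs
    · rw [he]; exact neg_mem habs

/-- Elements of `Vsub` are bounded by a multiple of `a`. -/
theorem V_bound (hle : IsLinVecOrder le) (h0a : le 0 a) {x : E →₀ ℝ}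
    (hx : x ∈ Vsub le a) : ∃ c : ℝ, 0 ≤ c ∧ le (vabs le x) (c • a) := by
  induction hx using Submodule.span_induction with
  | mem y hy =>
    refine ⟨1, zero_le_one, ?_⟩
    have h1 : vabs le y = y := by unfold vabs; exact if_pos hy.1
    rw [h1, one_smul]
    rw [← vabs_a hle h0a]
    exact hy.2
  | zero => exact ⟨0, le_rfl, by rw [vabs_zero]; simpa using refl hle 0⟩
  | add y z hy hz ihy ihz =>
    obtain ⟨c1, hc1, h1⟩ := ihy
    obtain ⟨c2, hc2, h2⟩ := ihz
    refine ⟨c1 + c2, by linarith, ?_⟩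
    refine trans hle (abs_add hle y z) ?_
    have := add_le_add hle h1 h2
    rwa [← add_smul] at this
  | smul α y hy ihy =>
    obtain ⟨c, hc, h1⟩ := ihy
    refine ⟨|α| * c, mul_nonneg (_root_.abs_nonneg α) hc, ?_⟩
    refine trans hle (abs_smul_le hle α y) ?_
    have := smul_le_smul hle (_root_.abs_nonneg α) h1
    rwa [smul_smul] at this

/-- If `0 < lam` and `h` is infinitesimal w.r.t. `a`, then `0 ≤ lam • a + h`. -/
theorem pos_case (hle : IsLinVecOrder le) (h0a : le 0 a) {lam : ℝ} {h : E →₀ ℝ}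
    (hlam : 0 < lam) (hinf : ∀ n : ℕ, le (n • vabs le h) a) :
    le 0 (lam • a + h) := by
  set n : ℕ := ⌈1 / lam⌉₊ with hn
  have hn1 : 1 ≤ lam * n := by
    have := Nat.le_ceil (1 / lam)
    calc (1:ℝ) = lam * (1 / lam) := by field_simp
    _ ≤ lam * n := by
      apply mul_le_mul_of_nonneg_left this hlam.le
  have h1 : le (vabs le h) (lam • a) := by
    have h2 : le ((lam * n) • vabs le h) (lam • a) := by
      have hb : le ((n : ℝ) • vabs le h) a := by
        rw [Nat.cast_smul_eq_nsmul ℝ]; exact hinf n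
      have := smul_le_smul hle hlam.le hb
      rwa [smul_smul] at this
    refine trans hle ?_ h2
    have := smul_mono hle (abs_nonneg hle h) hn1
    simpa using this
  have h3 : le (-(vabs le h)) h := neg_abs_le hle h
  have h4 : le 0 (lam • a - vabs le h) := by
    rw [← sub_nonneg hle]; exact h1
  have h5 : le (lam • a - vabs le h) (lam • a + h) := by
    have := hle.2.1 _ _ (lam • a) h3
    rwa [add_comm _ (lam • a), add_comm _ (lam • a), ← sub_eq_add_neg] at this
  exact trans hle h4 h5

/-- If `lam < 0` and `h` is infinitesimal w.r.t. `a`, then `lam • a + h ≤ 0`. -/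
theorem neg_case (hle : IsLinVecOrder le) (h0a : le 0 a) {lam : ℝ} {h : E →₀ ℝ}
    (hlam : lam < 0) (hinf : ∀ n : ℕ, le (n • vabs le h) a) :
    le (lam • a + h) 0 := by
  have hinf' : ∀ n : ℕ, le (n • vabs le (-h)) a := fun n => by
    refine trans hle ?_ (hinf n)
    rw [← Nat.cast_smul_eq_nsmul ℝ, ← Nat.cast_smul_eq_nsmul ℝ]
    exact smul_le_smul hle (by positivity) (abs_neg_le hle h)
  have := pos_case hle h0a (by linarith : 0 < -lam) hinf'
  have h2 := neg_le_neg hle this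
  rw [neg_zero] at h2
  rwa [neg_add, ← neg_smul, neg_neg, neg_neg] at h2

/-- Key lemma: if the two orders agree on rational vectors of `H`,
they agree on any rational vector of `V` (w.r.t. the first order). -/
theorem key {le' : (E →₀ ℝ) → (E →₀ ℝ) → Prop}
    (hle : IsLinVecOrder le) (hle' : IsLinVecOrder le')
    (h0a : le 0 a) (h0a' : le' 0 a) (hH : Hsub le a = Hsub le' a)
    (hyp : ∀ x ∈ RatVec E, x ∈ Hsub le a → (le 0 x ↔ le' 0 x))
    {x : E →₀ ℝ} (hx : x ∈ RatVec E) (hxV : x ∈ Vsub le a) :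
    le 0 x ↔ le' 0 x := by
  by_cases hx0 : x = 0
  · subst hx0; simp [refl hle 0, refl hle' 0]
  obtain ⟨c, hc, hbc⟩ := V_bound hle h0a hxV
  have ha0 : a ≠ 0 := by
    rintro rfl
    apply hx0
    have h1 : le (vabs le x) 0 := by simpa using hbc
    have h2 : vabs le x = 0 := antisymm hle h1 (abs_nonneg hle x)
    rcases abs_eq_or le x with he | he <;> rw [he, h2] <;> simp
  set S : Set ℝ := {r : ℝ | le (r • a) x} with hS
  have hSne : S.Nonempty := by
    refine ⟨-c, ?_⟩
    have h1 : le (-(c • a)) (-(vabs le x)) := neg_le_neg hle hbc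
    have h2 := trans hle h1 (neg_abs_le hle x)
    simpa [hS, neg_smul] using h2
  have hSbdd : BddAbove S := by
    refine ⟨c, fun r hr => ?_⟩
    by_contra hrc
    push_neg at hrc
    have h1 : le (r • a) (c • a) :=
      trans hle hr (trans hle (le_abs hle x) hbc)
    have h2 : le 0 ((r - c) • a) := smul_nonneg hle (by linarith) h0a
    have h3 : le ((r - c) • a) 0 := by
      rw [sub_nonneg hle] at h1
      have := neg_le_neg hle h1
      rw [neg_zero] at this
      rw [neg_sub, ← sub_smul] at this
      exact this
    have h4 : (r - c) • a = 0 := antisymm hle h3 (by simpa using h2)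
    have := smul_eq_zero.mp h4
    rcases this with h | h
    · exact absurd h (by intro hh; apply hrc.ne'; linarith [sub_eq_zero.mp hh])
    · exact ha0 h
  set lam : ℝ := sSup S with hlam
  have hlow : ∀ ε : ℝ, 0 < ε → le ((lam - ε) • a) x := by
    intro ε hε
    obtain ⟨r, hrS, hrlt⟩ := exists_lt_of_lt_csSup hSne (by linarith : lam - ε < lam)
    exact trans hle (smul_mono hle h0a hrlt.le) hrS
  have hup : ∀ ε : ℝ, 0 < ε → le x ((lam + ε) • a) := by
    intro ε hε
    have hni : (lam + ε) ∉ S := fun hmem => by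
      have := le_csSup hSbdd hmem
      linarith
    rcases total hle ((lam + ε) • a) x with h | h
    · exact absurd h hni
    · exact h
  set h : E →₀ ℝ := x - lam • a with hh
  have hinf : ∀ n : ℕ, le (n • vabs le h) a := by
    intro n
    rcases Nat.eq_zero_or_pos n with rfl | hn
    · simpa using h0a
    have hε : (0:ℝ) < 1 / n := by positivity
    have h1 : le h ((1/n : ℝ) • a) := by
      have := hup (1/n) hε
      rw [sub_nonneg hle] at this ⊢
      convert this using 1
      rw [hh]; rw [add_smul]; abel
    have h2 : le (-((1/n : ℝ) • a)) h := by
      have := hlow (1/n) hε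
      rw [sub_nonneg hle] at this ⊢
      convert this using 1
      rw [hh]; rw [sub_smul]; abel
    have h3 : le (vabs le h) ((1/n : ℝ) • a) := abs_le hle h2 h1
    have h4 := smul_le_smul hle (by positivity : (0:ℝ) ≤ (n:ℝ)) h3
    rw [smul_smul] at h4
    have hn' : (n:ℝ) ≠ 0 := by positivity
    rw [mul_one_div, div_self hn', one_smul, Nat.cast_smul_eq_nsmul ℝ] at h4
    exact h4
  have hHmem : h ∈ Hsub le a := (mem_H_iff hle h0a).2 hinf
  have hHmem' : h ∈ Hsub le' a := hH ▸ hHmem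
  have hinf' : ∀ n : ℕ, le' (n • vabs le' h) a := (mem_H_iff hle' h0a').1 hHmem'
  have hxe : x = lam • a + h := by rw [hh]; abel
  rcases lt_trichotomy lam 0 with hl | hl | hl
  · -- lam < 0 : x ≤ 0 and x ≠ 0 under both orders
    have hneg : le x 0 := hxe ▸ neg_case hle h0a hl hinf
    have hneg' : le' x 0 := hxe ▸ neg_case hle' h0a' hl hinf'
    constructor
    · intro hp; exact absurd (antisymm hle hneg hp) hx0
    · intro hp; exact absurd (antisymm hle' hneg' hp) hx0
  · -- lam = 0 : x = h ∈ H, use hypothesis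
    have : x = h := by rw [hxe, hl]; simp
    exact hyp x hx (this ▸ hHmem)
  · -- lam > 0
    have hpos : le 0 x := hxe ▸ pos_case hle h0a hl hinf
    have hpos' : le' 0 x := hxe ▸ pos_case hle' h0a' hl hinf'
    exact iff_of_true hpos hpos'

end LV

/-- for two linear vector-space orders with `0 ≤ a`, `0 ≤′ a` and the same
hyperplane `H_a = H′_a`, the induced orders agree on the rational vectors of
`V_a ∪ V′_a` iff they agree on the rational vectors of `H_a`. -/
theorem stmt17 {E : Type*}
    (le le' : (E →₀ ℝ) → (E →₀ ℝ) → Prop)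
    (hle : IsLinVecOrder le) (hle' : IsLinVecOrder le')
    (a : E →₀ ℝ) (ha : a ∈ RatVec E)
    (h0a : le 0 a) (h0a' : le' 0 a)
    (hH : Hsub le a = Hsub le' a) :
    (∀ x ∈ RatVec E, (x ∈ Vsub le a ∨ x ∈ Vsub le' a) → (le 0 x ↔ le' 0 x)) ↔
    (∀ x ∈ RatVec E, x ∈ Hsub le a → (le 0 x ↔ le' 0 x)) := by
  constructor
  · intro hV x hx hxH
    apply hV x hx
    left
    refine Submodule.span_mono ?_ hxH
    rintro y ⟨hy1, hy2⟩
    exact ⟨hy1, by simpa using hy2 1⟩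
  · intro hHyp x hx hxV
    rcases hxV with hxV | hxV
    · exact LV.key hle hle' h0a h0a' hH hHyp hx hxV
    · have hyp' : ∀ y ∈ RatVec E, y ∈ Hsub le' a → (le' 0 y ↔ le 0 y) := by
        intro y hy hyH
        exact (hHyp y hy (hH ▸ hyH)).symm
      exact (LV.key hle' hle h0a' h0a hH.symm hyp' hx hxV).symm
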